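/- arXiv:2411.13419 — 5 statements merged into one kernel-verified Lean document; each statement's English description precedes it below -/
import Mathlib

section
/- Let (Δ'_j)_{j≥1} be i.i.d. nonnegative real random variables on a probability space (Ω, F, P) with P(Δ'_1 > 0) > 0. Then there exist constants δ₁ > 0 and δ₂ > 0 such that P( for all n ≥ 1, Δ'_1 + Δ'_2 + ⋯ + Δ'_n ≥ n·δ₁ ) ≥ δ₂. -/
open MeasureTheory ProbabilityTheory Filter ENNReal

/-- Let `(Δ'_j)_{j≥1}` be i.i.d. nonnegative real random variables with
`P(Δ'_1 > 0) > 0`. Then there exist constants `δ₁ > 0` and `δ₂ > 0` such that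
`P(∀ n ≥ 1, Δ'_1 + ⋯ + Δ'_n ≥ n·δ₁) ≥ δ₂`. -/
theorem stmt_0 {Ω : Type*} [MeasureSpace Ω] [IsProbabilityMeasure (ℙ : Measure Ω)]
    (Δ : ℕ → Ω → ℝ)
    (hmeas : ∀ j, Measurable (Δ j))
    (hindep : iIndepFun Δ ℙ)
    (hident : ∀ j, IdentDistrib (Δ j) (Δ 0) ℙ ℙ)
    (hnonneg : ∀ j ω, 0 ≤ Δ j ω)
    (hpos : 0 < ℙ {ω | 0 < Δ 0 ω}) :
    ∃ δ₁ : ℝ, 0 < δ₁ ∧ ∃ δ₂ : ℝ≥0∞, 0 < δ₂ ∧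
      δ₂ ≤ ℙ {ω | ∀ n : ℕ, 1 ≤ n → (n : ℝ) * δ₁ ≤ ∑ j ∈ Finset.range n, Δ j ω} := by
  -- truncated variables
  set Y : ℕ → Ω → ℝ := fun j ω => min (Δ j ω) 1 with hY
  have hg : Measurable (fun x : ℝ => min x 1) := measurable_id.min measurable_const
  have hYmeas : ∀ j, Measurable (Y j) := fun j => hg.comp (hmeas j)
  have hYnonneg : ∀ j ω, 0 ≤ Y j ω := fun j ω => le_min (hnonneg j ω) one_pos.le
  have hYle1 : ∀ j ω, Y j ω ≤ 1 := fun j ω => min_le_right _ _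
  have hYleΔ : ∀ j ω, Y j ω ≤ Δ j ω := fun j ω => min_le_left _ _
  have hYident : ∀ j, IdentDistrib (Y j) (Y 0) ℙ ℙ := fun j => (hident j).comp hg
  have hYint : ∀ j, Integrable (Y j) ℙ := by
    intro j
    refine (integrable_const (1:ℝ)).mono' (hYmeas j).aestronglyMeasurable ?_
    filter_upwards with ω
    rw [Real.norm_eq_abs, abs_of_nonneg (hYnonneg j ω)]
    exact hYle1 j ω
  set m := ∫ ω, Y 0 ω ∂ℙ with hm
  have hmpos : 0 < m := by
    rw [hm, integral_pos_iff_support_of_nonneg (fun ω => hYnonneg 0 ω) (hYint 0)]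
    refine lt_of_lt_of_le hpos (measure_mono ?_)
    intro ω hω
    simp only [Set.mem_setOf_eq] at hω
    simp only [Function.mem_support, hY]
    exact ne_of_gt (lt_min hω one_pos)
  -- choose c > 0 with ℙ {c ≤ Δ 0} > 0
  obtain ⟨c, hcpos, hcP⟩ : ∃ c : ℝ, 0 < c ∧ 0 < ℙ {ω | c ≤ Δ 0 ω} := by
    by_contra h
    push_neg at h
    have hnull : ∀ k : ℕ, ℙ {ω | 1/((k:ℝ)+1) ≤ Δ 0 ω} = 0 := by
      intro k
      have := h (1/((k:ℝ)+1)) (by positivity)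
      exact le_antisymm this zero_le
    have : ℙ (⋃ k : ℕ, {ω | 1/((k:ℝ)+1) ≤ Δ 0 ω}) = 0 := measure_iUnion_null hnull
    have hsub : {ω | 0 < Δ 0 ω} ⊆ ⋃ k : ℕ, {ω | 1/((k:ℝ)+1) ≤ Δ 0 ω} := by
      intro ω hω
      obtain ⟨k, hk⟩ := exists_nat_one_div_lt (K := ℝ) (hω : 0 < Δ 0 ω)
      exact Set.mem_iUnion.2 ⟨k, hk.le⟩
    exact absurd (le_antisymm ((measure_mono hsub).trans this.le) zero_le) hpos.ne'
  -- SLLN for the shifted sequence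
  set X : ℕ → Ω → ℝ := fun j => Y (j + 1) with hX
  have hXident : ∀ j, IdentDistrib (X j) (X 0) ℙ ℙ :=
    fun j => (hYident (j+1)).trans (hYident 1).symm
  have hXindep : Pairwise (Function.onFun (IndepFun · · ℙ) X) := by
    intro i j hij
    exact ((hindep.indepFun (show i+1 ≠ j+1 by omega)).comp hg hg : IndepFun (X i) (X j) ℙ)
  have hEX : ∫ ω, X 0 ω ∂ℙ = m := by
    rw [hm]; exact (hYident 1).integral_eq
  have hslln := strong_law_ae_real X (hYint 1) hXindep hXident
  rw [hEX] at hslln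
  have hae : ∀ᵐ ω ∂ℙ, ∃ K : ℕ, ∀ n : ℕ, K ≤ n →
      (n:ℝ) * (m/2) ≤ ∑ i ∈ Finset.range n, X i ω := by
    filter_upwards [hslln] with ω hω
    have := hω.eventually (eventually_gt_nhds (half_lt_self hmpos))
    rw [eventually_atTop] at this
    obtain ⟨K, hK⟩ := this
    refine ⟨max K 1, fun (n:ℕ) hn => ?_⟩
    have h1 : m/2 < (∑ i ∈ Finset.range n, X i ω) / n := hK n (le_trans (le_max_left _ _) hn)
    have hn1 : (0:ℝ) < n := by
      have : 1 ≤ n := le_trans (le_max_right _ _) hn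
      exact_mod_cast this
    rw [lt_div_iff₀ hn1] at h1
    linarith [h1]
  set B : ℕ → Set Ω := fun K => {ω | ∀ n, K ≤ n → (n:ℝ) * (m/2) ≤ ∑ i ∈ Finset.range n, X i ω}
    with hB
  have hBmeas : ∀ K, MeasurableSet (B K) := by
    intro K
    have : B K = ⋂ n, ⋂ _ : K ≤ n, {ω | (n:ℝ) * (m/2) ≤ ∑ i ∈ Finset.range n, X i ω} := by
      ext ω; simp [hB, Set.mem_iInter]
    rw [this]
    refine MeasurableSet.iInter fun n => MeasurableSet.iInter fun _ => ?_
    exact measurableSet_le measurable_const (Finset.measurable_sum _ fun i _ => hYmeas (i+1))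
  have hBmono : Monotone B := fun K L hKL ω hω n hn => hω n (le_trans hKL hn)
  have hunion : ℙ (⋃ K, B K) = 1 := by
    rw [← prob_compl_eq_zero_iff (MeasurableSet.iUnion hBmeas)]
    refine measure_mono_null ?_ (ae_iff.mp hae)
    intro ω hω
    simp only [Set.mem_compl_iff, Set.mem_iUnion, not_exists] at hω
    simp only [Set.mem_setOf_eq]
    push_neg
    intro K
    have := hω K
    simp only [hB, Set.mem_setOf_eq] at this
    push_neg at this
    obtain ⟨n, hn, h⟩ := this
    exact ⟨n, hn, h⟩
  have htend := tendsto_measure_iUnion_atTop (μ := (ℙ : Measure Ω)) hBmono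
  rw [hunion] at htend
  obtain ⟨K, hK⟩ : ∃ K : ℕ, (1:ℝ≥0∞)/2 ≤ ℙ (B K) := by
    have := htend.eventually (eventually_gt_nhds (by norm_num : (1:ℝ≥0∞)/2 < 1))
    rw [eventually_atTop] at this
    obtain ⟨K, hK⟩ := this
    exact ⟨K, (hK K le_rfl).le⟩
  -- independence of A := {c ≤ Δ 0} and B K
  set A : Set Ω := {ω | c ≤ Δ 0 ω} with hA
  have hindep' : Indep (⨆ i ∈ ({0} : Set ℕ), MeasurableSpace.comap (Δ i) inferInstance)
      (⨆ i ∈ {i : ℕ | i ≠ 0}, MeasurableSpace.comap (Δ i) inferInstance) ℙ := by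
    refine indep_iSup_of_disjoint (fun i => (hmeas i).comap_le) hindep ?_
    simp [Set.disjoint_left]
  have hAmem : MeasurableSet[⨆ i ∈ ({0} : Set ℕ),
      MeasurableSpace.comap (Δ i) inferInstance] A := by
    have h0 : MeasurableSet[MeasurableSpace.comap (Δ 0) inferInstance] A :=
      ⟨Set.Ici c, measurableSet_Ici, rfl⟩
    exact (le_iSup₂ (f := fun i (_ : i ∈ ({0} : Set ℕ)) =>
      MeasurableSpace.comap (Δ i) inferInstance) 0 rfl) A h0
  have hBmem : MeasurableSet[⨆ i ∈ {i : ℕ | i ≠ 0},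
      MeasurableSpace.comap (Δ i) inferInstance] (B K) := by
    set mT := ⨆ i ∈ {i : ℕ | i ≠ 0}, MeasurableSpace.comap (Δ i) inferInstance with hmT
    have hXi : ∀ i : ℕ, Measurable[mT] (X i) := by
      intro i
      have h1 : Measurable[MeasurableSpace.comap (Δ (i+1)) inferInstance] (Δ (i+1)) :=
        fun s hs => ⟨s, hs, rfl⟩
      have hle : MeasurableSpace.comap (Δ (i+1)) inferInstance ≤ mT :=
        le_iSup₂ (f := fun i (_ : i ∈ {i : ℕ | i ≠ 0}) =>
          MeasurableSpace.comap (Δ i) inferInstance) (i+1) (by simp)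
      exact hg.comp (h1.mono hle le_rfl)
    have : B K = ⋂ n, ⋂ _ : K ≤ n, {ω | (n:ℝ) * (m/2) ≤ ∑ i ∈ Finset.range n, X i ω} := by
      ext ω; simp [hB, Set.mem_iInter]
    rw [this]
    refine MeasurableSet.iInter fun n => MeasurableSet.iInter fun _ => ?_
    have hsum : Measurable[mT] fun ω => ∑ i ∈ Finset.range n, X i ω := by
      apply Finset.measurable_sum (m := mT)
      exact fun i _ => hXi i
    exact hsum measurableSet_Ici
  have hprod : ℙ (A ∩ B K) = ℙ A * ℙ (B K) :=
    (Indep_iff _ _ _).1 hindep' A (B K) hAmem hBmem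
  -- choose δ₁, δ₂
  refine ⟨min (m/2) (c/(K+1)), lt_min (half_pos hmpos) (by positivity), ℙ A / 2, ?_, ?_⟩
  · exact ENNReal.div_pos hcP.ne' ofNat_ne_top
  · have hsub : A ∩ B K ⊆
        {ω | ∀ n : ℕ, 1 ≤ n → (n : ℝ) * min (m/2) (c/(K+1)) ≤ ∑ j ∈ Finset.range n, Δ j ω} := by
      rintro ω ⟨hωA, hωB⟩ n hn
      obtain ⟨k, rfl⟩ : ∃ k, n = k + 1 := ⟨n - 1, by omega⟩
      have hωA' : c ≤ Δ 0 ω := hωA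
      have hsum : Δ 0 ω + ∑ i ∈ Finset.range k, Δ (i+1) ω
          = ∑ j ∈ Finset.range (k+1), Δ j ω := by
        rw [Finset.sum_range_succ']; ring
      by_cases hk : k ≤ K
      · -- small n : use Δ 0 ω ≥ c alone
        have hkK : (k:ℝ) ≤ K := Nat.cast_le.mpr hk
        have h1 : ((k:ℝ)+1) * min (m/2) (c/(K+1)) ≤ ((K:ℝ)+1) * (c/(K+1)) := by
          apply mul_le_mul (by linarith) (min_le_right _ _)
            (le_min (half_pos hmpos).le (by positivity)) (by positivity)
        have h2 : ((K:ℝ)+1) * (c/(K+1)) = c := by field_simp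
        have h3 : (0:ℝ) ≤ ∑ i ∈ Finset.range k, Δ (i+1) ω :=
          Finset.sum_nonneg fun i _ => hnonneg _ ω
        push_cast
        linarith
      · -- large n : use the SLLN event
        have hkK : K ≤ k := by omega
        have hωB' : (k:ℝ) * (m/2) ≤ ∑ i ∈ Finset.range k, X i ω := hωB k hkK
        have hXleΔ : ∑ i ∈ Finset.range k, X i ω ≤ ∑ i ∈ Finset.range k, Δ (i+1) ω :=
          Finset.sum_le_sum fun i _ => hYleΔ (i+1) ω
        have hδc : min (m/2) (c/(K+1)) ≤ c := by
          refine (min_le_right _ _).trans ?_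
          rw [div_le_iff₀ (by positivity : (0:ℝ) < (K:ℝ)+1)]
          nlinarith [hcpos, Nat.cast_nonneg (α := ℝ) K]
        have hδm : min (m/2) (c/(K+1)) ≤ m/2 := min_le_left _ _
        have hkδ : (k:ℝ) * min (m/2) (c/(K+1)) ≤ (k:ℝ) * (m/2) :=
          mul_le_mul_of_nonneg_left hδm (Nat.cast_nonneg k)
        push_cast
        linarith
    calc ℙ A / 2 = ℙ A * (1/2) := by rw [div_eq_mul_inv, one_div]
      _ ≤ ℙ A * ℙ (B K) := mul_le_mul_right hK _
      _ = ℙ (A ∩ B K) := hprod.symm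
      _ ≤ _ := measure_mono hsub
end

section
/- Let a > 0 and p ∈ (0,1], and let (Z_j)_{j≥1} be i.i.d. random variables with P(Z_j = a) = p and P(Z_j = 0) = 1 − p. Then P( for all n ≥ 1, Z_1 + ⋯ + Z_n ≥ n·(a·p/2) ) > 0. -/
open MeasureTheory ProbabilityTheory Filter ENNReal

/-- Let `a > 0`, `p ∈ (0,1]`, and `(Z_j)_{j≥1}` i.i.d. with `P(Z_j = a) = p` and
`P(Z_j = 0) = 1 − p`. Then `P(∀ n ≥ 1, Z_1 + ⋯ + Z_n ≥ n·(a·p/2)) > 0`. -/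
theorem stmt_1 {Ω : Type*} [MeasureSpace Ω] [IsProbabilityMeasure (ℙ : Measure Ω)]
    (a p : ℝ) (ha : 0 < a) (hp : p ∈ Set.Ioc (0 : ℝ) 1)
    (Z : ℕ → Ω → ℝ)
    (hmeas : ∀ j, Measurable (Z j))
    (hindep : iIndepFun Z ℙ)
    (hident : ∀ j, IdentDistrib (Z j) (Z 0) ℙ ℙ)
    (hZa : ∀ j, ℙ {ω | Z j ω = a} = ENNReal.ofReal p)
    (hZ0 : ∀ j, ℙ {ω | Z j ω = 0} = ENNReal.ofReal (1 - p)) :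
    0 < ℙ {ω | ∀ n : ℕ, 1 ≤ n → (n : ℝ) * (a * p / 2) ≤ ∑ j ∈ Finset.range n, Z j ω} := by
  obtain ⟨hp0, hp1⟩ := hp
  have hm : (0:ℝ) < a * p := mul_pos ha hp0
  -- the good (a.s.) set
  have hgood : ∀ᵐ ω, ∀ j, Z j ω = a ∨ Z j ω = 0 := by
    rw [ae_all_iff]
    intro j
    have hma : MeasurableSet {ω | Z j ω = a} := hmeas j (measurableSet_singleton a)
    have hm0 : MeasurableSet {ω | Z j ω = 0} := hmeas j (measurableSet_singleton 0)
    have hdisj : Disjoint {ω | Z j ω = a} {ω | Z j ω = 0} := by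
      rw [Set.disjoint_left]
      rintro ω (h1 : _ = a) (h2 : _ = 0)
      exact absurd (h1 ▸ h2) (ne_of_gt ha)
    have hun : ℙ ({ω | Z j ω = a} ∪ {ω | Z j ω = 0}) = 1 := by
      rw [measure_union hdisj hm0, hZa j, hZ0 j, ← ENNReal.ofReal_add hp0.le (by linarith)]
      norm_num
    have hc : ℙ ({ω | Z j ω = a} ∪ {ω | Z j ω = 0})ᶜ = 0 :=
      (prob_compl_eq_zero_iff (hma.union hm0)).mpr hun
    rw [ae_iff]
    exact hc
  -- mean of Z 0
  have hma0 : MeasurableSet {ω | Z 0 ω = a} := hmeas 0 (measurableSet_singleton a)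
  have hind_eq : Z 0 =ᵐ[ℙ] fun ω => Set.indicator {ω | Z 0 ω = a} (fun _ => a) ω := by
    filter_upwards [hgood] with ω hω
    rcases hω 0 with h | h
    · rw [Set.indicator_of_mem (show ω ∈ {ω | Z 0 ω = a} from h)]; exact h
    · rw [h, Set.indicator_of_notMem]
      intro hmem
      exact absurd ((hmem : Z 0 ω = a).symm.trans h) (ne_of_gt ha)
  have hint : Integrable (Z 0) ℙ := ((integrable_const a).indicator hma0).congr hind_eq.symm
  have hmean : (∫ ω, Z 0 ω ∂ℙ) = a * p := by
    rw [integral_congr_ae hind_eq]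
    have := integral_indicator_const (μ := (ℙ : Measure Ω)) a hma0
    rw [this, measureReal_def, hZa 0, ENNReal.toReal_ofReal hp0.le]
    simp [mul_comm]
  -- SLLN
  have hslln := strong_law_ae_real Z hint (fun i j hij => hindep.indepFun hij) hident
  rw [show (ℙ : Measure Ω)[Z 0] = a * p from hmean] at hslln
  set S : ℕ → Ω → ℝ := fun n ω => ∑ j ∈ Finset.range n, Z j ω with hS
  set A : ℕ → Set Ω := fun K => {ω | ∀ n, K ≤ n → (n:ℝ) * (3*(a*p)/4) ≤ S n ω} with hA
  have hAe : ∀ᵐ ω, ∃ K, ω ∈ A K := by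
    filter_upwards [hslln] with ω hω
    have hev : ∀ᶠ n : ℕ in atTop, 3*(a*p)/4 < S n ω / n :=
      hω.eventually (eventually_gt_nhds (by nlinarith))
    obtain ⟨K, hK⟩ := Filter.eventually_atTop.mp (hev.and (eventually_gt_atTop 0))
    refine ⟨K, fun n hn => ?_⟩
    obtain ⟨h1, h2⟩ := hK n hn
    have hnpos : (0:ℝ) < n := by exact_mod_cast h2
    have := (lt_div_iff₀ hnpos).mp h1
    linarith [this]
  obtain ⟨K, hKpos⟩ : ∃ K, 0 < ℙ (A K) := by
    by_contra h
    push_neg at h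
    have hU : ℙ (⋃ K, A K) = 0 :=
      measure_iUnion_null fun K => le_antisymm (h K) zero_le
    have h1 : (1:ℝ≥0∞) ≤ 0 := by
      calc (1:ℝ≥0∞) = ℙ Set.univ := measure_univ.symm
      _ ≤ ℙ (⋃ K, A K) + ℙ {ω | ¬ ∃ K, ω ∈ A K} := by
          refine (measure_mono ?_).trans (measure_union_le _ _)
          intro ω _
          by_cases hω : ∃ K, ω ∈ A K
          · exact Or.inl (Set.mem_iUnion.mpr hω)
          · exact Or.inr hω
      _ = 0 := by rw [hU, ae_iff.mp hAe, add_zero]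
    simp at h1
  -- the event D: first K variables equal a
  set D : Set Ω := ⋂ j ∈ Finset.range K, Z j ⁻¹' {a} with hDdef
  have hDval : ℙ D = ENNReal.ofReal p ^ K := by
    rw [hDdef, hindep.meas_biInter (s := fun j => Z j ⁻¹' {a})
      (fun i _ => ⟨{a}, measurableSet_singleton a, rfl⟩)]
    have : ∀ i, ℙ (Z i ⁻¹' {a}) = ENNReal.ofReal p := fun i => hZa i
    simp [this]
  have hDpos : 0 < ℙ D := by
    rw [hDval]
    exact ENNReal.pow_pos (ENNReal.ofReal_pos.mpr hp0) K
  -- the tail event A'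
  set A' : Set Ω :=
    ⋂ n, ⋂ (_ : K ≤ n),
      (fun ω => ∑ j ∈ Finset.Ico K n, Z j ω) ⁻¹' Set.Ici ((n:ℝ) * (3*(a*p)/4) - K * a)
      with hA'def
  -- independence of D and A'
  set MS := ⨆ i ∈ {i : ℕ | i < K}, MeasurableSpace.comap (Z i) inferInstance with hMS
  set MT := ⨆ i ∈ {i : ℕ | K ≤ i}, MeasurableSpace.comap (Z i) inferInstance with hMT
  have hInd : Indep MS MT ℙ := by
    refine indep_iSup_of_disjoint (fun i => (hmeas i).comap_le) hindep.iIndep ?_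
    rw [Set.disjoint_left]
    intro i h1 h2
    exact absurd h2 (by simpa using h1)
  have hDmeas : MeasurableSet[MS] D := by
    refine MeasurableSet.biInter (Finset.range K).countable_toSet (fun j hj => ?_)
    have h1 : MeasurableSet[MeasurableSpace.comap (Z j) inferInstance] (Z j ⁻¹' {a}) :=
      ⟨{a}, measurableSet_singleton a, rfl⟩
    exact (le_iSup₂ (f := fun i (_ : i ∈ {i : ℕ | i < K}) =>
      MeasurableSpace.comap (Z i) inferInstance) j (Finset.mem_range.mp hj)) _ h1
  have hZT : ∀ j, K ≤ j → Measurable[MT] (Z j) := fun j hj =>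
    (comap_measurable (Z j)).mono
      (le_iSup₂ (f := fun i (_ : i ∈ {i : ℕ | K ≤ i}) =>
        MeasurableSpace.comap (Z i) inferInstance) j hj) le_rfl
  have hA'meas : MeasurableSet[MT] A' := by
    refine MeasurableSet.iInter fun n => MeasurableSet.iInter fun hn => ?_
    have hsum : Measurable[MT] (fun ω => ∑ j ∈ Finset.Ico K n, Z j ω) := by
      refine Finset.measurable_sum _ (fun j hj => hZT j ?_)
      exact (Finset.mem_Ico.mp hj).1
    exact hsum measurableSet_Ici
  have hprod : ℙ (D ∩ A') = ℙ D * ℙ A' :=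
    (Indep_iff _ _ _).mp hInd D A' hDmeas hA'meas
  -- A' has positive probability
  have hA'pos : 0 < ℙ A' := by
    have hsub : A K ⊆ A' ∪ {ω | ¬ ∀ j, Z j ω = a ∨ Z j ω = 0} := by
      intro ω hω
      by_cases hg : ∀ j, Z j ω = a ∨ Z j ω = 0
      · left
        refine Set.mem_iInter.mpr fun n => Set.mem_iInter.mpr fun hn => ?_
        have hsum : ∑ j ∈ Finset.Ico K n, Z j ω = S n ω - S K ω :=
          Finset.sum_Ico_eq_sub _ hn
        have hSK : S K ω ≤ K * a := by
          have : S K ω ≤ ∑ _j ∈ Finset.range K, a :=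
            Finset.sum_le_sum (fun j _ => by
              rcases hg j with h | h
              · rw [h]
              · rw [h]; exact ha.le)
          simpa [mul_comm] using this
        have h2 := hω n hn
        simp only [Set.mem_preimage, Set.mem_Ici, hsum]
        linarith
      · right; exact hg
    have hle : ℙ (A K) ≤ ℙ A' + ℙ {ω | ¬ ∀ j, Z j ω = a ∨ Z j ω = 0} :=
      (measure_mono hsub).trans (measure_union_le _ _)
    rw [ae_iff.mp hgood, add_zero] at hle
    exact lt_of_lt_of_le hKpos hle
  -- final inclusion
  have hfinal : D ∩ A' ∩ {ω | ∀ j, Z j ω = a ∨ Z j ω = 0} ⊆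
      {ω | ∀ n : ℕ, 1 ≤ n → (n : ℝ) * (a * p / 2) ≤ ∑ j ∈ Finset.range n, Z j ω} := by
    rintro ω ⟨⟨hD, hA'⟩, hg⟩
    have hDa : ∀ j, j < K → Z j ω = a := fun j hj => by
      have := Set.mem_iInter₂.mp hD j (Finset.mem_range.mpr hj)
      exact this
    intro n hn
    rcases le_or_gt n K with hnK | hnK
    · have : ∑ j ∈ Finset.range n, Z j ω = n * a := by
        rw [Finset.sum_congr rfl (fun j hj => hDa j (lt_of_lt_of_le (Finset.mem_range.mp hj) hnK))]
        simp [mul_comm]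
      rw [this]
      have hn0 : (0:ℝ) ≤ n := Nat.cast_nonneg n
      have hca : a * p / 2 ≤ a := by nlinarith
      exact mul_le_mul_of_nonneg_left hca hn0
    · have hKn : K ≤ n := hnK.le
      have h1 := Set.mem_iInter₂.mp hA' n hKn
      simp only [Set.mem_preimage, Set.mem_Ici] at h1
      have hsum : ∑ j ∈ Finset.Ico K n, Z j ω = S n ω - S K ω :=
        Finset.sum_Ico_eq_sub _ hKn
      have hSK : S K ω = K * a := by
        rw [hS]
        simp only []
        rw [Finset.sum_congr rfl (fun j hj => hDa j (Finset.mem_range.mp hj))]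
        simp [mul_comm]
      rw [hsum, hSK] at h1
      have hn0 : (0:ℝ) ≤ n := Nat.cast_nonneg n
      have : (n:ℝ) * (3*(a*p)/4) ≤ S n ω := by linarith
      have hfin : (n:ℝ) * (a * p / 2) ≤ S n ω := by nlinarith
      exact hfin
  -- conclude
  have hDApos : 0 < ℙ (D ∩ A') := by
    rw [hprod]
    exact ENNReal.mul_pos hDpos.ne' hA'pos.ne'
  have hle2 : ℙ (D ∩ A') ≤
      ℙ {ω | ∀ n : ℕ, 1 ≤ n → (n : ℝ) * (a * p / 2) ≤ ∑ j ∈ Finset.range n, Z j ω}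
        + ℙ {ω | ¬ ∀ j, Z j ω = a ∨ Z j ω = 0} := by
    refine (measure_mono ?_).trans (measure_union_le _ _)
    intro ω hω
    by_cases hg : ∀ j, Z j ω = a ∨ Z j ω = 0
    · exact Or.inl (hfinal ⟨hω, hg⟩)
    · exact Or.inr hg
  rw [ae_iff.mp hgood, add_zero] at hle2
  exact lt_of_lt_of_le hDApos hle2
end

section
/- Let (Δ_j)_{j≥1} be i.i.d. nonnegative real random variables with P(Δ_1 > 0) > 0. Then there exist constants ε₀ > 0 and δ₂ > 0 such that P( ∏_{i=1}^∞ (1 − exp(−(Δ_1 + Δ_2 + ⋯ + Δ_i))) ≥ ε₀ ) ≥ δ₂. -/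
open MeasureTheory ProbabilityTheory Filter ENNReal

private lemma exp_neg_two_le_aux (x : ℝ) (hx0 : 0 ≤ x) (hx : x ≤ 1/2) :
    Real.exp (-(2*x)) ≤ 1 - x := by
  have h1 : (2*x) + 1 ≤ Real.exp (2*x) := Real.add_one_le_exp (2*x)
  have hab : Real.exp (-(2*x)) * Real.exp (2*x) = 1 := by
    rw [← Real.exp_add]; simp
  nlinarith [Real.exp_pos (-(2*x)), Real.exp_pos (2*x)]

private lemma prod_lower_bound (f : ℕ → ℝ) (h0 : ∀ i, 0 < f i) (h1 : ∀ i, f i < 1)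
    (hsum : Summable f) :
    ∃ ε : ℝ, 0 < ε ∧ ∀ M, ε ≤ ∏ i ∈ Finset.range M, (1 - f i) := by
  have hf0 : Tendsto f atTop (nhds 0) := hsum.tendsto_atTop_zero
  obtain ⟨M₀, hM₀⟩ : ∃ M₀, ∀ i ≥ M₀, f i ≤ 1/2 := by
    have h := hf0.eventually_lt_const (by norm_num : (0:ℝ) < 1/2)
    rcases eventually_atTop.1 h with ⟨N, hN⟩
    exact ⟨N, fun i hi => (hN i hi).le⟩
  set C : ℝ := ∏ i ∈ Finset.range M₀, (1 - f i) with hCdef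
  have hC : 0 < C := Finset.prod_pos fun i _ => by linarith [h1 i]
  set S : ℝ := ∑' i, f i with hSdef
  have hS0 : 0 ≤ S := tsum_nonneg fun i => (h0 i).le
  refine ⟨C * Real.exp (-(2*S)), mul_pos hC (Real.exp_pos _), fun M => ?_⟩
  have hfac0 : ∀ i, (0:ℝ) ≤ 1 - f i := fun i => by linarith [h1 i]
  rcases le_or_gt M M₀ with hM | hM
  · have hsplit : (∏ i ∈ Finset.range M, (1 - f i)) * ∏ i ∈ Finset.Ico M M₀, (1 - f i) = C :=
      Finset.prod_range_mul_prod_Ico _ hM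
    have hQ : (∏ i ∈ Finset.Ico M M₀, (1 - f i)) ≤ 1 :=
      Finset.prod_le_one (fun i _ => hfac0 i) (fun i _ => by linarith [(h0 i)])
    have hPnn : (0:ℝ) ≤ ∏ i ∈ Finset.range M, (1 - f i) :=
      Finset.prod_nonneg fun i _ => hfac0 i
    have : C ≤ ∏ i ∈ Finset.range M, (1 - f i) := by
      calc C = (∏ i ∈ Finset.range M, (1 - f i)) * ∏ i ∈ Finset.Ico M M₀, (1 - f i) :=
              hsplit.symm
        _ ≤ (∏ i ∈ Finset.range M, (1 - f i)) * 1 := by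
              exact mul_le_mul_of_nonneg_left hQ hPnn
        _ = ∏ i ∈ Finset.range M, (1 - f i) := mul_one _
    have hexp1 : Real.exp (-(2*S)) ≤ 1 := Real.exp_le_one_iff.2 (by linarith)
    nlinarith
  · have hsplit : C * ∏ i ∈ Finset.Ico M₀ M, (1 - f i) = ∏ i ∈ Finset.range M, (1 - f i) :=
      Finset.prod_range_mul_prod_Ico _ hM.le
    have hstep : ∀ i ∈ Finset.Ico M₀ M, Real.exp (-(2 * f i)) ≤ 1 - f i := fun i hi =>
      exp_neg_two_le_aux (f i) (h0 i).le (hM₀ i (Finset.mem_Ico.1 hi).1)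
    have h2 : (∏ i ∈ Finset.Ico M₀ M, Real.exp (-(2 * f i)))
        ≤ ∏ i ∈ Finset.Ico M₀ M, (1 - f i) :=
      Finset.prod_le_prod (fun i _ => (Real.exp_pos _).le) hstep
    have h3 : (∏ i ∈ Finset.Ico M₀ M, Real.exp (-(2 * f i)))
        = Real.exp (∑ i ∈ Finset.Ico M₀ M, -(2 * f i)) := (Real.exp_sum _ _).symm
    have h4 : (∑ i ∈ Finset.Ico M₀ M, f i) ≤ S :=
      Summable.sum_le_tsum _ (fun i _ => (h0 i).le) hsum
    have h5 : -(2*S) ≤ ∑ i ∈ Finset.Ico M₀ M, -(2 * f i) := by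
      have heq : (∑ i ∈ Finset.Ico M₀ M, -(2 * f i)) = -(2 * ∑ i ∈ Finset.Ico M₀ M, f i) := by
        rw [Finset.mul_sum, ← Finset.sum_neg_distrib]
      rw [heq]
      linarith
    calc C * Real.exp (-(2*S)) ≤ C * Real.exp (∑ i ∈ Finset.Ico M₀ M, -(2 * f i)) :=
          mul_le_mul_of_nonneg_left (Real.exp_le_exp.2 h5) hC.le
      _ = C * ∏ i ∈ Finset.Ico M₀ M, Real.exp (-(2 * f i)) := by rw [h3]
      _ ≤ C * ∏ i ∈ Finset.Ico M₀ M, (1 - f i) := mul_le_mul_of_nonneg_left h2 hC.le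
      _ = ∏ i ∈ Finset.range M, (1 - f i) := hsplit

private lemma summable_exp_neg_aux {S : ℕ → ℝ} {c : ℝ} (hc : 0 < c) (N : ℕ)
    (hS : ∀ i ≥ N, c * (i+1) ≤ S i) : Summable (fun i => Real.exp (-(S i))) := by
  rw [← summable_nat_add_iff N]
  have hr0 : (0:ℝ) ≤ Real.exp (-c) := (Real.exp_pos _).le
  have hr1 : Real.exp (-c) < 1 := Real.exp_lt_one_iff.2 (by linarith)
  refine Summable.of_nonneg_of_le (fun i => (Real.exp_pos _).le) (fun i => ?_)
    (summable_geometric_of_lt_one hr0 hr1)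
  have h1 : c * (i + N + 1) ≤ S (i + N) := by
    have := hS (i + N) (Nat.le_add_left N i)
    push_cast at this ⊢
    linarith
  have h2 : Real.exp (-(S (i + N))) ≤ Real.exp (-(c * (i + N + 1))) :=
    Real.exp_le_exp.2 (by linarith)
  have h3 : Real.exp (-(c * (i + N + 1))) ≤ Real.exp (-(c * i)) := by
    apply Real.exp_le_exp.2
    have : c * i ≤ c * (i + N + 1) := by
      apply mul_le_mul_of_nonneg_left _ hc.le
      push_cast; linarith [Nat.cast_nonneg (α := ℝ) N]
    linarith
  have h4 : Real.exp (-(c * i)) = Real.exp (-c) ^ i := by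
    rw [← Real.exp_nat_mul]; ring_nf
  calc Real.exp (-(S (i + N))) ≤ Real.exp (-(c * (i + N + 1))) := h2
    _ ≤ Real.exp (-(c * i)) := h3
    _ = Real.exp (-c) ^ i := h4

/-- Let `(Δ_j)_{j≥1}` be i.i.d. nonnegative real random variables with `P(Δ_1 > 0) > 0`.
Then there exist `ε₀ > 0` and `δ₂ > 0` such that
`P(∏_{i=1}^∞ (1 − exp(−(Δ_1 + ⋯ + Δ_i))) ≥ ε₀) ≥ δ₂`, where the infinite product is
the pointwise limit of the partial products. -/
theorem stmt_4 {Ω : Type*} [MeasureSpace Ω] [IsProbabilityMeasure (ℙ : Measure Ω)]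
    (Δ : ℕ → Ω → ℝ)
    (hmeas : ∀ j, Measurable (Δ j))
    (hindep : iIndepFun Δ ℙ)
    (hident : ∀ j, IdentDistrib (Δ j) (Δ 0) ℙ ℙ)
    (hnonneg : ∀ j ω, 0 ≤ Δ j ω)
    (hpos : 0 < ℙ {ω | 0 < Δ 0 ω}) :
    ∃ ε₀ : ℝ, 0 < ε₀ ∧ ∃ δ₂ : ℝ≥0∞, 0 < δ₂ ∧
      δ₂ ≤ ℙ {ω | ∃ L : ℝ, ε₀ ≤ L ∧
        Tendsto (fun N : ℕ =>
            ∏ i ∈ Finset.range N,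
              (1 - Real.exp (-(∑ j ∈ Finset.range (i + 1), Δ j ω))))
          atTop (nhds L)} := by
  classical
  -- truncated variables
  set Y : ℕ → Ω → ℝ := fun j ω => min (Δ j ω) 1 with hYdef
  have hYmeas : ∀ j, Measurable (Y j) := fun j => (hmeas j).min measurable_const
  have hgmeas : Measurable (fun x : ℝ => min x 1) := measurable_id.min measurable_const
  have hYindep : iIndepFun Y ℙ :=
    hindep.comp (fun _ => fun x => min x 1) (fun _ => hgmeas)
  have hYpair : Pairwise (Function.onFun (IndepFun · · ℙ) Y) := fun i j hij => hYindep.indepFun hij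
  have hYident : ∀ j, IdentDistrib (Y j) (Y 0) ℙ ℙ := fun j => (hident j).comp hgmeas
  have hYnn : ∀ j ω, 0 ≤ Y j ω := fun j ω => le_min (hnonneg j ω) zero_le_one
  have hYint : Integrable (Y 0) ℙ := by
    refine Integrable.mono' (integrable_const (1:ℝ)) (hYmeas 0).aestronglyMeasurable
      (ae_of_all _ fun ω => ?_)
    rw [Real.norm_eq_abs, abs_of_nonneg (hYnn 0 ω)]
    exact min_le_right _ _
  set μ0 : ℝ := ∫ ω, Y 0 ω with hμ0def
  have hμ0 : 0 < μ0 := by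
    rw [hμ0def, integral_pos_iff_support_of_nonneg (fun ω => hYnn 0 ω) hYint]
    refine lt_of_lt_of_le hpos (measure_mono fun ω hω => ?_)
    simp only [Function.mem_support, hYdef]
    have : (0:ℝ) < min (Δ 0 ω) 1 := lt_min hω one_pos
    exact ne_of_gt this
  have hlln := strong_law_ae_real Y hYint hYpair hYident
  -- partial products
  set P : ℕ → Ω → ℝ := fun M ω =>
    ∏ i ∈ Finset.range M, (1 - Real.exp (-(∑ j ∈ Finset.range (i + 1), Δ j ω))) with hPdef
  have hSnn : ∀ ω i, (0:ℝ) ≤ ∑ j ∈ Finset.range (i + 1), Δ j ω := fun ω i =>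
    Finset.sum_nonneg fun j _ => hnonneg j ω
  have hfac0 : ∀ ω i, (0:ℝ) ≤ 1 - Real.exp (-(∑ j ∈ Finset.range (i + 1), Δ j ω)) := by
    intro ω i
    have : Real.exp (-(∑ j ∈ Finset.range (i + 1), Δ j ω)) ≤ 1 :=
      Real.exp_le_one_iff.2 (by linarith [hSnn ω i])
    linarith
  have hfac1 : ∀ ω i, 1 - Real.exp (-(∑ j ∈ Finset.range (i + 1), Δ j ω)) ≤ 1 := by
    intro ω i; linarith [Real.exp_pos (-(∑ j ∈ Finset.range (i + 1), Δ j ω))]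
  have hPnn : ∀ M ω, 0 ≤ P M ω := fun M ω => Finset.prod_nonneg fun i _ => hfac0 ω i
  have hPanti : ∀ ω, Antitone fun M => P M ω := by
    intro ω
    apply antitone_nat_of_succ_le
    intro M
    rw [hPdef]
    simp only [Finset.prod_range_succ]
    exact mul_le_of_le_one_right (hPnn M ω) (hfac1 ω M)
  set L : Ω → ℝ := fun ω => ⨅ M, P M ω with hLdef
  have hbdd : ∀ ω, BddBelow (Set.range fun M => P M ω) := fun ω =>
    ⟨0, Set.forall_mem_range.2 fun M => hPnn M ω⟩
  have htend : ∀ ω, Tendsto (fun M => P M ω) atTop (nhds (L ω)) := fun ω =>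
    tendsto_atTop_ciInf (hPanti ω) (hbdd ω)
  have hPmeas : ∀ M, Measurable (P M) := by
    intro M
    apply Finset.measurable_prod
    intro i _
    exact measurable_const.sub
      (Real.measurable_exp.comp (Finset.measurable_sum _ fun j _ => hmeas j).neg)
  have hLmeas : Measurable L :=
    measurable_of_tendsto_metrizable' atTop hPmeas (tendsto_pi_nhds.2 htend)
  -- a.e. positivity of L on {Δ 0 > 0}
  have hae : ∀ᵐ ω, ω ∈ {ω | 0 < Δ 0 ω} → ω ∈ {ω | 0 < L ω} := by
    filter_upwards [hlln] with ω hω hΔ0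
    set s : ℕ → ℝ := fun i => ∑ j ∈ Finset.range (i + 1), Δ j ω with hsdef
    have hspos : ∀ i, 0 < s i := fun i =>
      lt_of_lt_of_le hΔ0 (Finset.single_le_sum (fun j _ => hnonneg j ω)
        (Finset.mem_range.2 (Nat.succ_pos i)))
    have hf0 : ∀ i, 0 < Real.exp (-(s i)) := fun i => Real.exp_pos _
    have hf1 : ∀ i, Real.exp (-(s i)) < 1 := fun i =>
      Real.exp_lt_one_iff.2 (by linarith [hspos i])
    -- summability
    obtain ⟨N, hN⟩ : ∃ N, ∀ n ≥ N, μ0 / 2 < (∑ i ∈ Finset.range n, Y i ω) / n :=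
      eventually_atTop.1 (hω.eventually_const_lt (half_lt_self hμ0))
    have hsum : Summable fun i => Real.exp (-(s i)) := by
      apply summable_exp_neg_aux (half_pos hμ0) (max N 1)
      intro i hi
      have hi1 : N ≤ i + 1 := le_trans (le_trans (le_max_left N 1) hi) (Nat.le_succ i)
      have hn1 : (1:ℕ) ≤ i + 1 := Nat.succ_le_succ (Nat.zero_le i)
      have hnpos : (0:ℝ) < ((i:ℝ) + 1) := by positivity
      have h := hN (i + 1) hi1
      rw [lt_div_iff₀ (by exact_mod_cast hnpos)] at h
      push_cast at h
      have hTS : (∑ j ∈ Finset.range (i + 1), Y j ω) ≤ s i :=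
        Finset.sum_le_sum fun j _ => min_le_left _ _
      push_cast
      linarith
    obtain ⟨ε, hε, hεM⟩ := prod_lower_bound (fun i => Real.exp (-(s i))) hf0 hf1 hsum
    have hLε : ε ≤ L ω := le_ciInf fun M => hεM M
    exact lt_of_lt_of_le hε hLε
  have hq : ℙ {ω | 0 < Δ 0 ω} ≤ ℙ {ω | 0 < L ω} := measure_mono_ae hae
  -- continuity from below
  have hunion : {ω | 0 < L ω} = ⋃ k : ℕ, {ω | 1/((k:ℝ)+1) ≤ L ω} := by
    ext ω
    simp only [Set.mem_setOf_eq, Set.mem_iUnion]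
    constructor
    · intro h
      obtain ⟨k, hk⟩ := exists_nat_one_div_lt h
      exact ⟨k, hk.le⟩
    · rintro ⟨k, hk⟩
      refine lt_of_lt_of_le ?_ hk
      positivity
  have hdir : Directed (· ⊆ ·) fun k : ℕ => {ω | 1/((k:ℝ)+1) ≤ L ω} := by
    have hmono : Monotone fun k : ℕ => {ω | 1/((k:ℝ)+1) ≤ L ω} := by
      intro i j hij ω hω
      have hij' : (i:ℝ) + 1 ≤ (j:ℝ) + 1 := by
        have : (i:ℝ) ≤ j := Nat.cast_le.2 hij
        linarith
      exact le_trans (one_div_le_one_div_of_le (by positivity) hij') hω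
    exact hmono.directed_le
  have hsup : ℙ {ω | 0 < L ω} = ⨆ k : ℕ, ℙ {ω | 1/((k:ℝ)+1) ≤ L ω} := by
    rw [hunion]; exact hdir.measure_iUnion
  have hq2 : ℙ {ω | 0 < Δ 0 ω} / 2 < ⨆ k : ℕ, ℙ {ω | 1/((k:ℝ)+1) ≤ L ω} := by
    calc ℙ {ω | 0 < Δ 0 ω} / 2 < ℙ {ω | 0 < Δ 0 ω} :=
          ENNReal.half_lt_self hpos.ne' (measure_ne_top ℙ _)
      _ ≤ ℙ {ω | 0 < L ω} := hq
      _ = _ := hsup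
  obtain ⟨k, hk⟩ := lt_iSup_iff.1 hq2
  refine ⟨1/((k:ℝ)+1), by positivity, ℙ {ω | 0 < Δ 0 ω} / 2,
    ENNReal.half_pos hpos.ne', ?_⟩
  refine le_trans hk.le (measure_mono ?_)
  intro ω hω
  exact ⟨L ω, hω, htend ω⟩
end

section
/- Let a > 0, set μ = e^a − 1, and let ξ be a real random variable with the exponential distribution of rate 1. Then 1 − 1/(2μ) ≤ E[ ∏_{x=1}^∞ (1 − e^{−ξ − a x}) ] ≤ μ·(1 − e^{−1/μ}). -/
open MeasureTheory ProbabilityTheory Filter ENNReal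

open Topology

lemma weier_aux {u : ℕ → ℝ} (h0 : ∀ x, 0 ≤ u x) (h1 : ∀ x, u x ≤ 1) (N : ℕ) :
    1 - ∑ x ∈ Finset.Icc 1 N, u x ≤ ∏ x ∈ Finset.Icc 1 N, (1 - u x) := by
  induction N with
  | zero => simp
  | succ n ih =>
    rw [Finset.sum_Icc_succ_top (Nat.le_add_left 1 n),
      Finset.prod_Icc_succ_top (Nat.le_add_left 1 n)]
    have hs : 0 ≤ ∑ x ∈ Finset.Icc 1 n, u x := Finset.sum_nonneg fun x _ => h0 x
    nlinarith [h0 (n + 1), h1 (n + 1),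
      mul_le_mul_of_nonneg_right ih (by linarith [h1 (n + 1)] : (0:ℝ) ≤ 1 - u (n + 1))]

lemma icc_sum_eq {r : ℝ} (N : ℕ) :
    ∑ x ∈ Finset.Icc 1 N, r ^ x = r * ∑ i ∈ Finset.range N, r ^ i := by
  rw [← Finset.Ico_add_one_right_eq_Icc, Finset.sum_Ico_eq_sum_range]
  simp [pow_add, pow_one, Finset.mul_sum]

lemma geom_Icc_le {r : ℝ} (h0 : 0 ≤ r) (h1 : r < 1) (N : ℕ) :
    ∑ x ∈ Finset.Icc 1 N, r ^ x ≤ r * (1 - r)⁻¹ := by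
  rw [icc_sum_eq]
  refine mul_le_mul_of_nonneg_left ?_ h0
  calc ∑ i ∈ Finset.range N, r ^ i
      ≤ ∑' i : ℕ, r ^ i := (summable_geometric_of_lt_one h0 h1).sum_le_tsum _ (fun i _ => pow_nonneg h0 i)
    _ = (1 - r)⁻¹ := tsum_geometric_of_lt_one h0 h1

lemma geom_Icc_tendsto {r : ℝ} (h0 : 0 ≤ r) (h1 : r < 1) :
    Tendsto (fun N => ∑ x ∈ Finset.Icc 1 N, r ^ x) atTop (𝓝 (r * (1 - r)⁻¹)) := by
  have h := ((hasSum_geometric_of_lt_one h0 h1).tendsto_sum_nat).const_mul r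
  exact h.congr fun N => (icc_sum_eq N).symm

lemma map_eq {Ω : Type*} [MeasureSpace Ω] [IsProbabilityMeasure (ℙ : Measure Ω)]
    (ξ : Ω → ℝ) (hmeas : Measurable ξ)
    (hexp : ∀ t : ℝ, 0 ≤ t → ℙ {ω | t < ξ ω} = ENNReal.ofReal (Real.exp (-t))) :
    Measure.map ξ ℙ = MeasureTheory.volume.withDensity
      (Set.indicator (Set.Ioi 0) (fun s => ENNReal.ofReal (Real.exp (-s)))) := by
  have hprob : IsProbabilityMeasure (Measure.map ξ ℙ) :=
    Measure.isProbabilityMeasure_map hmeas.aemeasurable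
  have hgt : ∀ s : ℝ, MeasurableSet {ω | s < ξ ω} := fun s =>
    measurableSet_lt measurable_const hmeas
  have hzero : ℙ {ω | ξ ω ≤ 0} = 0 := by
    have h0 := hexp 0 le_rfl
    have hs : {ω | ξ ω ≤ 0} = {ω | (0:ℝ) < ξ ω}ᶜ := by ext ω; simp [not_lt]
    rw [hs, measure_compl (hgt 0) (measure_ne_top _ _), h0, measure_univ]
    simp
  refine Measure.ext_of_Iic _ _ (fun t => ?_)
  rw [Measure.map_apply hmeas measurableSet_Iic, withDensity_apply _ measurableSet_Iic]
  rcases lt_or_ge t 0 with ht | ht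
  · have hL : ℙ (ξ ⁻¹' Set.Iic t) = 0 :=
      measure_mono_null (fun ω hω => le_trans hω ht.le) hzero
    rw [hL]
    have hz : ∀ s ∈ Set.Iic t,
        Set.indicator (Set.Ioi 0) (fun s => ENNReal.ofReal (Real.exp (-s))) s = 0 := by
      intro s hs
      refine Set.indicator_of_notMem ?_ _
      simp only [Set.mem_Ioi, not_lt]
      have : s ≤ t := hs
      linarith
    rw [setLIntegral_congr_fun measurableSet_Iic hz]
    simp
  · have hL : ℙ (ξ ⁻¹' Set.Iic t) = ENNReal.ofReal (1 - Real.exp (-t)) := by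
      have hset : ξ ⁻¹' Set.Iic t = {ω | t < ξ ω}ᶜ := by ext ω; simp [not_lt]
      rw [hset, measure_compl (hgt t) (measure_ne_top _ _), measure_univ, hexp t ht,
        ← ENNReal.ofReal_one, ← ENNReal.ofReal_sub _ (Real.exp_nonneg _)]
    rw [hL]
    have hR : ∫⁻ s in Set.Iic t,
        Set.indicator (Set.Ioi 0) (fun s => ENNReal.ofReal (Real.exp (-s))) s
        = ∫⁻ s in Set.Ioc 0 t, ENNReal.ofReal (Real.exp (-s)) := by
      rw [lintegral_indicator measurableSet_Ioi _,
        Measure.restrict_restrict measurableSet_Ioi, Set.Ioi_inter_Iic]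
    rw [hR, ← ofReal_integral_eq_lintegral_ofReal]
    · congr 1
      rw [← intervalIntegral.integral_of_le ht]
      rw [intervalIntegral.integral_comp_neg (fun x => Real.exp x)]
      rw [integral_exp]
      simp
    · exact (Real.continuous_exp.comp continuous_neg).integrableOn_Ioc
    · exact ae_of_all _ fun s => Real.exp_nonneg _

lemma integrableOn_aux {g : ℝ → ℝ} (hg : Measurable g) (hg0 : ∀ s, 0 ≤ g s)
    (hg1 : ∀ s, 0 ≤ s → g s ≤ 1) :
    IntegrableOn (fun s => Real.exp (-s) * g s) (Set.Ioi 0) := by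
  have hmaj : IntegrableOn (fun x : ℝ => Real.exp (-x)) (Set.Ioi 0) := by
    have := exp_neg_integrableOn_Ioi 0 (one_pos (α := ℝ))
    simpa using this
  refine Integrable.mono' hmaj ((Real.measurable_exp.comp measurable_neg).mul hg).aestronglyMeasurable
    ?_
  filter_upwards [ae_restrict_mem measurableSet_Ioi] with s hs
  have hg1 := hg1 s (le_of_lt hs)
  rw [Real.norm_eq_abs, abs_of_nonneg (mul_nonneg (Real.exp_nonneg _) (hg0 s))]
  calc Real.exp (-s) * g s ≤ Real.exp (-s) * 1 :=
        mul_le_mul_of_nonneg_left hg1 (Real.exp_nonneg _)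
    _ = Real.exp (-s) := mul_one _


lemma integral_comp_eq {Ω : Type*} [MeasureSpace Ω] [IsProbabilityMeasure (ℙ : Measure Ω)]
    (ξ : Ω → ℝ) (hmeas : Measurable ξ)
    (hexp : ∀ t : ℝ, 0 ≤ t → ℙ {ω | t < ξ ω} = ENNReal.ofReal (Real.exp (-t)))
    (g : ℝ → ℝ) (hg : Measurable g) (hg0 : ∀ s, 0 ≤ g s) (hg1 : ∀ s, 0 ≤ s → g s ≤ 1) :
    ∫ ω, g (ξ ω) ∂ℙ = ∫ s in Set.Ioi 0, Real.exp (-s) * g s := by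
  have hgi := integrableOn_aux hg hg0 hg1
  have h1 : ∫ ω, g (ξ ω) ∂ℙ = ∫ s, g s ∂(Measure.map ξ ℙ) :=
    (integral_map hmeas.aemeasurable hg.aestronglyMeasurable).symm
  rw [h1, map_eq ξ hmeas hexp]
  set ν := MeasureTheory.volume.withDensity
      (Set.indicator (Set.Ioi 0) (fun s => ENNReal.ofReal (Real.exp (-s)))) with hν
  have h2 : ∫ s, g s ∂ν = (∫⁻ s, ENNReal.ofReal (g s) ∂ν).toReal := by
    rw [integral_eq_lintegral_of_nonneg_ae (ae_of_all _ hg0) hg.aestronglyMeasurable]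
  have h3 : ∫⁻ s, ENNReal.ofReal (g s) ∂ν
      = ∫⁻ s, Set.indicator (Set.Ioi 0) (fun s => ENNReal.ofReal (Real.exp (-s))) s
          * ENNReal.ofReal (g s) := by
    rw [hν, lintegral_withDensity_eq_lintegral_mul _
      (((Measurable.exp measurable_neg : Measurable fun s : ℝ => Real.exp (-s)).ennreal_ofReal).indicator
        measurableSet_Ioi) hg.ennreal_ofReal]
    rfl
  have h4 : ∫⁻ s, Set.indicator (Set.Ioi 0) (fun s => ENNReal.ofReal (Real.exp (-s))) s
          * ENNReal.ofReal (g s)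
      = ∫⁻ s, Set.indicator (Set.Ioi 0)
          (fun s => ENNReal.ofReal (Real.exp (-s) * g s)) s := by
    refine lintegral_congr fun s => ?_
    by_cases hs : s ∈ Set.Ioi (0:ℝ)
    · rw [Set.indicator_of_mem hs, Set.indicator_of_mem hs,
        ENNReal.ofReal_mul (Real.exp_nonneg _)]
    · rw [Set.indicator_of_notMem hs, Set.indicator_of_notMem hs, zero_mul]
  have h5 : ∫⁻ s, Set.indicator (Set.Ioi 0)
          (fun s => ENNReal.ofReal (Real.exp (-s) * g s)) s
      = ENNReal.ofReal (∫ s in Set.Ioi 0, Real.exp (-s) * g s) := by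
    rw [lintegral_indicator measurableSet_Ioi,
      ← ofReal_integral_eq_lintegral_ofReal hgi
        (ae_of_all _ fun s => mul_nonneg (Real.exp_nonneg _) (hg0 s))]
  rw [h2, h3, h4, h5, ENNReal.toReal_ofReal]
  exact setIntegral_nonneg measurableSet_Ioi fun s _ => mul_nonneg (Real.exp_nonneg _) (hg0 s)

lemma intA : ∫ s in Set.Ioi (0:ℝ), Real.exp (-s) * Real.exp (-s) = 1/2 := by
  have hderiv : ∀ s ∈ Set.Ici (0:ℝ),
      HasDerivAt (fun x : ℝ => -(Real.exp (-2*x)/2)) (Real.exp (-s) * Real.exp (-s)) s := by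
    intro s _
    have h1 : HasDerivAt (fun x : ℝ => -2*x) (-2) s := by
      simpa using (hasDerivAt_id s).const_mul (-2)
    have h3 : HasDerivAt (fun x : ℝ => -(Real.exp (-2*x)/2)) (-(Real.exp (-2 * s) * -2 / 2)) s :=
      (h1.exp.div_const 2).neg
    convert h3 using 1
    rw [← Real.exp_add]
    ring_nf
  have htend : Tendsto (fun x : ℝ => -(Real.exp (-2*x)/2)) atTop (𝓝 0) := by
    have h1 : Tendsto (fun x : ℝ => Real.exp (-(2*x))) atTop (𝓝 0) :=
      Real.tendsto_exp_neg_atTop_nhds_zero.comp (tendsto_id.const_mul_atTop two_pos)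
    have h2 : Tendsto (fun x : ℝ => -(Real.exp (-(2*x))/2)) atTop (𝓝 (-(0/2))) :=
      (h1.div_const 2).neg
    simpa [neg_mul] using h2
  have := integral_Ioi_of_hasDerivAt_of_nonneg' hderiv
    (fun s _ => mul_nonneg (Real.exp_nonneg _) (Real.exp_nonneg _)) htend
  rw [this]
  norm_num

lemma intB {μ : ℝ} (hμ : 0 < μ) :
    ∫ s in Set.Ioi (0:ℝ), Real.exp (-s) * Real.exp (-(Real.exp (-s) * μ⁻¹))
      = μ * (1 - Real.exp (-1/μ)) := by
  have hderiv : ∀ s ∈ Set.Ici (0:ℝ),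
      HasDerivAt (fun x : ℝ => μ * Real.exp (-(Real.exp (-x) * μ⁻¹)))
        (Real.exp (-s) * Real.exp (-(Real.exp (-s) * μ⁻¹))) s := by
    intro s _
    have h1 : HasDerivAt (fun x : ℝ => -x) (-1) s := by
      exact hasDerivAt_neg' s
    have h2 : HasDerivAt (fun x : ℝ => -(Real.exp (-x) * μ⁻¹))
        (-(Real.exp (-s) * -1 * μ⁻¹)) s := ((h1.exp.mul_const μ⁻¹)).neg
    have h3 : HasDerivAt (fun x : ℝ => μ * Real.exp (-(Real.exp (-x) * μ⁻¹)))
        (μ * (Real.exp (-(Real.exp (-s) * μ⁻¹)) * -(Real.exp (-s) * -1 * μ⁻¹))) s :=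
      (h2.exp.const_mul μ)
    convert h3 using 1
    field_simp
  have htend : Tendsto (fun x : ℝ => μ * Real.exp (-(Real.exp (-x) * μ⁻¹))) atTop (𝓝 μ) := by
    have hc : Continuous fun t : ℝ => μ * Real.exp (-(t * μ⁻¹)) := by continuity
    have h2 := (hc.tendsto 0).comp Real.tendsto_exp_neg_atTop_nhds_zero
    simpa [Function.comp_def] using h2
  have := integral_Ioi_of_hasDerivAt_of_nonneg' hderiv
    (fun s _ => mul_nonneg (Real.exp_nonneg _) (Real.exp_nonneg _)) htend
  rw [this]
  rw [neg_zero, Real.exp_zero, one_mul, neg_div, one_div]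
  ring

/-- Let `a > 0`, `μ = e^a − 1`, and `ξ` exponential of rate 1 (`P(ξ > t) = e^{−t}` for
`t ≥ 0`). Then `1 − 1/(2μ) ≤ E[∏_{x=1}^∞ (1 − e^{−ξ−ax})] ≤ μ(1 − e^{−1/μ})`.
For each realization, the partial products are nonincreasing and bounded below, so the
infinite product equals the infimum of the partial products. -/
theorem stmt_5 {Ω : Type*} [MeasureSpace Ω] [IsProbabilityMeasure (ℙ : Measure Ω)]
    (a : ℝ) (ha : 0 < a) (μ : ℝ) (hμ : μ = Real.exp a - 1)
    (ξ : Ω → ℝ) (hmeas : Measurable ξ)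
    (hexp : ∀ t : ℝ, 0 ≤ t → ℙ {ω | t < ξ ω} = ENNReal.ofReal (Real.exp (-t))) :
    1 - 1 / (2 * μ) ≤
        ∫ ω, (⨅ N : ℕ, ∏ x ∈ Finset.Icc 1 N, (1 - Real.exp (-ξ ω - a * x))) ∂ℙ ∧
      ∫ ω, (⨅ N : ℕ, ∏ x ∈ Finset.Icc 1 N, (1 - Real.exp (-ξ ω - a * x))) ∂ℙ ≤
        μ * (1 - Real.exp (-1 / μ)) := by
  have hμpos : 0 < μ := by nlinarith [Real.add_one_le_exp a]
  set r : ℝ := Real.exp (-a) with hr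
  have hr0 : 0 < r := Real.exp_pos _
  have hr1 : r < 1 := Real.exp_lt_one_iff.mpr (by linarith)
  have hea : Real.exp a ≠ 0 := (Real.exp_pos a).ne'
  have hrμ : r * (1 - r)⁻¹ = μ⁻¹ := by
    rw [hr, Real.exp_neg, hμ]
    have h1 : (1 : ℝ) - (Real.exp a)⁻¹ = (Real.exp a - 1) / Real.exp a := by field_simp
    rw [h1]
    rw [div_eq_mul_inv, mul_inv, inv_inv]
    field_simp
  -- a.e. positivity
  have hξmeas : MeasurableSet {ω | (0:ℝ) < ξ ω} := measurableSet_lt measurable_const hmeas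
  have hpos : ∀ᵐ ω ∂(ℙ : Measure Ω), 0 < ξ ω := by
    rw [ae_iff]
    have : {ω | ¬ 0 < ξ ω} = {ω | (0:ℝ) < ξ ω}ᶜ := by ext ω; simp
    rw [this, measure_compl hξmeas (measure_ne_top _ _), measure_univ, hexp 0 le_rfl]
    simp
  set f : Ω → ℝ := fun ω => ⨅ N : ℕ, ∏ x ∈ Finset.Icc 1 N, (1 - Real.exp (-ξ ω - a * x))
    with hf
  -- pointwise facts
  have hux : ∀ ω, ∀ x : ℕ, Real.exp (-ξ ω - a * x) = Real.exp (-ξ ω) * r ^ x := by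
    intro ω x
    rw [sub_eq_add_neg, Real.exp_add]
    congr 1
    rw [show -(a * (x:ℝ)) = (x:ℝ) * -a by ring, Real.exp_nat_mul]
  have key : ∀ ω, 0 < ξ ω →
      0 ≤ f ω ∧ f ω ≤ 1 ∧ 1 - Real.exp (-ξ ω) * μ⁻¹ ≤ f ω ∧
        f ω ≤ Real.exp (-(Real.exp (-ξ ω) * μ⁻¹)) := by
    intro ω hω
    have hu0 : ∀ x : ℕ, 0 ≤ Real.exp (-ξ ω - a * x) := fun x => (Real.exp_pos _).le
    have hu1 : ∀ x : ℕ, Real.exp (-ξ ω - a * x) ≤ 1 := by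
      intro x
      rw [← Real.exp_zero]
      apply Real.exp_le_exp.mpr
      have : 0 ≤ a * (x:ℝ) := by positivity
      linarith
    have hprodnn : ∀ N : ℕ, 0 ≤ ∏ x ∈ Finset.Icc 1 N, (1 - Real.exp (-ξ ω - a * x)) :=
      fun N => Finset.prod_nonneg fun x _ => by linarith [hu1 x]
    have hbdd : BddBelow (Set.range fun N : ℕ =>
        ∏ x ∈ Finset.Icc 1 N, (1 - Real.exp (-ξ ω - a * x))) := by
      refine ⟨0, ?_⟩
      rintro y ⟨N, rfl⟩
      exact hprodnn N
    have hsum : ∀ N : ℕ, ∑ x ∈ Finset.Icc 1 N, Real.exp (-ξ ω - a * x)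
        ≤ Real.exp (-ξ ω) * μ⁻¹ := by
      intro N
      have h1 : ∑ x ∈ Finset.Icc 1 N, Real.exp (-ξ ω - a * x)
          = Real.exp (-ξ ω) * ∑ x ∈ Finset.Icc 1 N, r ^ x := by
        rw [Finset.mul_sum]
        exact Finset.sum_congr rfl fun x _ => hux ω x
      rw [h1, ← hrμ]
      exact mul_le_mul_of_nonneg_left (geom_Icc_le hr0.le hr1 N) (Real.exp_nonneg _)
    refine ⟨le_ciInf hprodnn, (ciInf_le hbdd 0).trans (by simp), le_ciInf fun (N : ℕ) => ?_, ?_⟩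
    · calc 1 - Real.exp (-ξ ω) * μ⁻¹ ≤ 1 - ∑ x ∈ Finset.Icc 1 N, Real.exp (-ξ ω - a * x) := by
            linarith [hsum N]
        _ ≤ _ := weier_aux hu0 hu1 N
    · -- upper bound via limit
      have hS : Tendsto (fun N : ℕ => ∑ x ∈ Finset.Icc 1 N, Real.exp (-ξ ω - a * x)) atTop
          (𝓝 (Real.exp (-ξ ω) * μ⁻¹)) := by
        have h1 := (geom_Icc_tendsto hr0.le hr1).const_mul (Real.exp (-ξ ω))
        rw [hrμ] at h1
        refine Filter.Tendsto.congr (fun (N : ℕ) => ?_) h1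
        rw [Finset.mul_sum]
        exact Finset.sum_congr rfl fun x _ => (hux ω x).symm
      have hT : Tendsto (fun N : ℕ => Real.exp (-(∑ x ∈ Finset.Icc 1 N, Real.exp (-ξ ω - a * x))))
          atTop (𝓝 (Real.exp (-(Real.exp (-ξ ω) * μ⁻¹)))) :=
        (Real.continuous_exp.tendsto _).comp hS.neg
      refine ge_of_tendsto hT (Eventually.of_forall fun (N : ℕ) => ?_)
      calc f ω ≤ ∏ x ∈ Finset.Icc 1 N, (1 - Real.exp (-ξ ω - a * x)) := ciInf_le hbdd N
        _ ≤ ∏ x ∈ Finset.Icc 1 N, Real.exp (-(Real.exp (-ξ ω - a * x))) := by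
            refine Finset.prod_le_prod (fun x _ => by linarith [hu1 x]) fun x _ => ?_
            linarith [Real.add_one_le_exp (-(Real.exp (-ξ ω - a * x)))]
        _ = Real.exp (-(∑ x ∈ Finset.Icc 1 N, Real.exp (-ξ ω - a * x))) := by
            rw [← Real.exp_sum]
            congr 1
            rw [Finset.sum_neg_distrib]
  -- measurability & integrability
  have hfmeas : Measurable f := by
    apply Measurable.iInf
    intro N
    apply Finset.measurable_prod
    intro x _
    exact measurable_const.sub (Measurable.exp (hmeas.neg.sub measurable_const))
  have hfint : Integrable f ℙ := by
    refine Integrable.mono' (integrable_const 1) hfmeas.aestronglyMeasurable ?_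
    filter_upwards [hpos] with ω hω
    rw [Real.norm_eq_abs, abs_le]
    exact ⟨by linarith [(key ω hω).1], (key ω hω).2.1⟩
  have hgmeas : Measurable fun ω => Real.exp (-ξ ω) := Measurable.exp hmeas.neg
  have heint : Integrable (fun ω => Real.exp (-ξ ω)) ℙ := by
    refine Integrable.mono' (integrable_const 1) hgmeas.aestronglyMeasurable ?_
    filter_upwards [hpos] with ω hω
    rw [Real.norm_eq_abs, abs_of_nonneg (Real.exp_nonneg _), ← Real.exp_zero]
    exact Real.exp_le_exp.mpr (by linarith)
  have hGmeas : Measurable fun ω => Real.exp (-(Real.exp (-ξ ω) * μ⁻¹)) :=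
    Measurable.exp ((hgmeas.mul_const μ⁻¹).neg)
  have hGint : Integrable (fun ω => Real.exp (-(Real.exp (-ξ ω) * μ⁻¹))) ℙ := by
    refine Integrable.mono' (integrable_const 1) hGmeas.aestronglyMeasurable ?_
    refine ae_of_all _ fun ω => ?_
    rw [Real.norm_eq_abs, abs_of_nonneg (Real.exp_nonneg _), ← Real.exp_zero]
    refine Real.exp_le_exp.mpr ?_
    have : 0 ≤ Real.exp (-ξ ω) * μ⁻¹ := by positivity
    linarith
  -- the two expectations
  have hEexp : ∫ ω, Real.exp (-ξ ω) ∂ℙ = 1/2 := by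
    rw [integral_comp_eq ξ hmeas hexp (fun s => Real.exp (-s))
      (Measurable.exp measurable_neg) (fun s => (Real.exp_pos _).le)
      (fun s hs => by rw [← Real.exp_zero]; exact Real.exp_le_exp.mpr (by linarith))]
    exact intA
  have hEG : ∫ ω, Real.exp (-(Real.exp (-ξ ω) * μ⁻¹)) ∂ℙ = μ * (1 - Real.exp (-1/μ)) := by
    rw [integral_comp_eq ξ hmeas hexp (fun s => Real.exp (-(Real.exp (-s) * μ⁻¹)))
      (Measurable.exp (((Measurable.exp measurable_neg).mul_const μ⁻¹).neg))
      (fun s => (Real.exp_pos _).le)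
      (fun s _ => by
        rw [← Real.exp_zero]
        refine Real.exp_le_exp.mpr ?_
        have : 0 ≤ Real.exp (-s) * μ⁻¹ := by positivity
        linarith)]
    exact intB hμpos
  have hL2int : Integrable (fun ω => 1 - Real.exp (-ξ ω) * μ⁻¹) ℙ :=
    (integrable_const 1).sub (heint.mul_const μ⁻¹)
  constructor
  · have h1 : ∫ ω, (1 - Real.exp (-ξ ω) * μ⁻¹) ∂ℙ ≤ ∫ ω, f ω ∂ℙ :=
      integral_mono_ae hL2int hfint (hpos.mono fun ω hω => (key ω hω).2.2.1)
    have h2 : ∫ ω, (1 - Real.exp (-ξ ω) * μ⁻¹) ∂ℙ = 1 - 1/2 * μ⁻¹ := by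
      rw [integral_sub (integrable_const 1) (heint.mul_const μ⁻¹), integral_const,
        probReal_univ, integral_mul_const, hEexp]
      simp
    have h3 : 1 - 1/(2*μ) = 1 - 1/2 * μ⁻¹ := by ring
    rw [h3, ← h2]
    exact h1
  · have h1 : ∫ ω, f ω ∂ℙ ≤ ∫ ω, Real.exp (-(Real.exp (-ξ ω) * μ⁻¹)) ∂ℙ :=
      integral_mono_ae hfint hGint (hpos.mono fun ω hω => (key ω hω).2.2.2)
    rw [hEG] at h1
    exact h1
end

section
/- Let ξ be a real random variable with the exponential distribution of rate 1. Then lim_{a→∞} (e^a − 1)·( 1 − E[ ∏_{x=1}^∞ (1 − e^{−ξ − a x}) ] ) = 1/2. -/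
open MeasureTheory ProbabilityTheory Filter ENNReal


private lemma weier (s : Finset ℕ) (u : ℕ → ℝ) (h0 : ∀ i ∈ s, 0 ≤ u i) (h1 : ∀ i ∈ s, u i ≤ 1) :
    1 - ∑ i ∈ s, u i ≤ ∏ i ∈ s, (1 - u i) := by
  classical
  induction s using Finset.cons_induction with
  | empty => simp
  | cons a s ha ih =>
    rw [Finset.sum_cons, Finset.prod_cons]
    have h0' : ∀ i ∈ s, 0 ≤ u i := fun i hi => h0 i (Finset.mem_cons_of_mem hi)
    have h1' : ∀ i ∈ s, u i ≤ 1 := fun i hi => h1 i (Finset.mem_cons_of_mem hi)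
    have hP : 1 - ∑ i ∈ s, u i ≤ ∏ i ∈ s, (1 - u i) := ih h0' h1'
    have hS : 0 ≤ ∑ i ∈ s, u i := Finset.sum_nonneg h0'
    have ha0 := h0 a (Finset.mem_cons_self a s)
    have ha1 := h1 a (Finset.mem_cons_self a s)
    nlinarith [hP, hS, ha0, ha1]

private lemma geom (r : ℝ) (hr0 : 0 ≤ r) (hr1 : r < 1) (N : ℕ) :
    ∑ x ∈ Finset.Icc 1 N, r ^ x ≤ r / (1 - r) := by
  rw [← Finset.Ico_add_one_right_eq_Icc]
  simpa using geom_sum_Ico_le_of_lt_one hr0 hr1 (m := 1) (n := N + 1)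


/-- Let `ξ` be exponential of rate 1 (`P(ξ > t) = e^{−t}` for `t ≥ 0`). Then
`lim_{a→∞} (e^a − 1)·(1 − E[∏_{x=1}^∞ (1 − e^{−ξ−ax})]) = 1/2`.
For each realization and each `a > 0`, the partial products are nonincreasing and
bounded below, so the infinite product equals the infimum of the partial products. -/
theorem stmt_6 {Ω : Type*} [MeasureSpace Ω] [IsProbabilityMeasure (ℙ : Measure Ω)]
    (ξ : Ω → ℝ) (hmeas : Measurable ξ)
    (hexp : ∀ t : ℝ, 0 ≤ t → ℙ {ω | t < ξ ω} = ENNReal.ofReal (Real.exp (-t))) :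
    Tendsto (fun a : ℝ =>
        (Real.exp a - 1) *
          (1 - ∫ ω, (⨅ N : ℕ, ∏ x ∈ Finset.Icc 1 N, (1 - Real.exp (-ξ ω - a * x))) ∂ℙ))
      atTop (nhds (1 / 2)) := by
  set g : Ω → ℝ := fun ω => Real.exp (-ξ ω) with hgdef
  have hgmeas : Measurable g := Real.measurable_exp.comp hmeas.neg
  have hone : ℙ {ω | 0 < ξ ω} = 1 := by simpa using hexp 0 le_rfl
  have hms0 : MeasurableSet {ω | 0 < ξ ω} := measurableSet_lt measurable_const hmeas
  have hnull : ℙ {ω | 0 < ξ ω}ᶜ = 0 := by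
    rw [measure_compl hms0 (measure_ne_top _ _), measure_univ, hone, tsub_self]
  have hpos : ∀ᵐ ω ∂(ℙ : Measure Ω), 0 < ξ ω := by
    rw [ae_iff]
    convert hnull using 2
    rfl
  -- survival probability with ≤
  have hge : ∀ s : ℝ, 0 < s → ℙ {ω | s ≤ ξ ω} = ENNReal.ofReal (Real.exp (-s)) := by
    intro s hs
    set A : ℕ → Set Ω := fun n => {ω | s - s / (n + 1) < ξ ω} with hA
    have hmA : ∀ n, MeasurableSet (A n) := fun n => measurableSet_lt measurable_const hmeas
    have hanti : Antitone A := by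
      intro n m hnm ω hω
      have hd : s / (m + 1) ≤ s / (n + 1) := by
        apply div_le_div_of_nonneg_left hs.le (by positivity)
        exact_mod_cast by omega
      simp only [A, Set.mem_setOf_eq] at hω ⊢
      linarith
    have hInter : (⋂ n, A n) = {ω | s ≤ ξ ω} := by
      ext ω
      simp only [Set.mem_iInter, A, Set.mem_setOf_eq]
      constructor
      · intro h
        by_contra hlt
        push_neg at hlt
        obtain ⟨n, hn⟩ := exists_nat_gt (s / (s - ξ ω))
        have hsub : 0 < s - ξ ω := by linarith
        have : s / (n + 1) < s - ξ ω := by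
          rw [div_lt_iff₀ (by positivity)]
          have : s / (s - ξ ω) < (n : ℝ) + 1 := by linarith [hn]
          calc s = (s / (s - ξ ω)) * (s - ξ ω) := by field_simp
          _ < ((n : ℝ) + 1) * (s - ξ ω) := by
                apply mul_lt_mul_of_pos_right this hsub
          _ = (s - ξ ω) * ((n : ℝ) + 1) := by ring
        linarith [h n]
      · intro h n
        have : 0 < s / (n + 1) := by positivity
        linarith
    have hlim := tendsto_measure_iInter_atTop (μ := (ℙ : Measure Ω)) (fun n => (hmA n).nullMeasurableSet) hanti
      ⟨0, measure_ne_top _ _⟩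
    rw [hInter] at hlim
    have hval : ∀ n : ℕ, ℙ (A n) = ENNReal.ofReal (Real.exp (-(s - s / (n + 1)))) := by
      intro n
      apply hexp
      have h1 : s / (n + 1) ≤ s / 1 := by
        apply div_le_div_of_nonneg_left hs.le one_pos
        exact_mod_cast by omega
      simpa using by linarith [h1]
    have hlim2 : Tendsto (fun n : ℕ => ℙ (A n)) atTop
        (nhds (ENNReal.ofReal (Real.exp (-s)))) := by
      simp only [hval]
      have h0 : Tendsto (fun n : ℕ => s / (n + 1)) atTop (nhds 0) := by
        apply Tendsto.div_atTop tendsto_const_nhds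
        exact tendsto_atTop_add_const_right _ 1 tendsto_natCast_atTop_atTop
      have h1 : Tendsto (fun n : ℕ => -(s - s / (n + 1))) atTop (nhds (-s)) := by
        have h2 := (h0.const_sub s).neg
        simpa using h2
      exact (ENNReal.continuous_ofReal.tendsto _).comp ((Real.continuous_exp.tendsto _).comp h1)
    exact tendsto_nhds_unique hlim hlim2
  -- tail of g
  have hlt : ∀ t : ℝ, 0 < t → ℙ {ω | t < g ω} = ENNReal.ofReal (1 - t) := by
    intro t ht
    rcases le_or_gt 1 t with h1 | h1
    · have hsub : {ω | t < g ω} ⊆ {ω | 0 < ξ ω}ᶜ := by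
        intro ω hω
        simp only [Set.mem_setOf_eq, hgdef] at hω
        simp only [Set.mem_compl_iff, Set.mem_setOf_eq, not_lt]
        by_contra hcon
        push_neg at hcon
        have : Real.exp (-ξ ω) < 1 := Real.exp_lt_one_iff.mpr (by linarith)
        linarith
      rw [measure_mono_null hsub hnull, ENNReal.ofReal_eq_zero.2 (by linarith)]
    · have hst : {ω | t < g ω} = {ω | (-Real.log t) ≤ ξ ω}ᶜ := by
        ext ω
        simp only [Set.mem_setOf_eq, Set.mem_compl_iff, not_le, hgdef]
        rw [← Real.log_lt_iff_lt_exp ht]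
        constructor <;> intro h <;> linarith
      rw [hst, measure_compl (measurableSet_le measurable_const hmeas) (measure_ne_top _ _),
        measure_univ, hge _ (by simpa using Real.log_neg ht h1), neg_neg, Real.exp_log ht]
      rw [← ENNReal.ofReal_one, ← ENNReal.ofReal_sub _ ht.le]
  -- layer cake
  have hkey := lintegral_eq_lintegral_meas_lt ℙ
    (ae_of_all _ fun ω => (Real.exp_pos (-ξ ω)).le) hgmeas.aemeasurable
  have h2 : ∫⁻ t in Set.Ioi (0:ℝ), ℙ {a | t < g a} = ∫⁻ t in Set.Ioi (0:ℝ), ENNReal.ofReal (1 - t) :=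
    setLIntegral_congr_fun measurableSet_Ioi (fun t ht => hlt t ht)
  have h3 : ∫⁻ t in Set.Ioi (0:ℝ), ENNReal.ofReal (1 - t) = ENNReal.ofReal (1 / 2) := by
    have hsplit : Set.Ioi (0:ℝ) = Set.Ioc 0 1 ∪ Set.Ioi 1 :=
      (Set.Ioc_union_Ioi_eq_Ioi zero_le_one).symm
    rw [hsplit, lintegral_union measurableSet_Ioi (Set.Ioc_disjoint_Ioi le_rfl)]
    have hz : ∫⁻ t in Set.Ioi (1:ℝ), ENNReal.ofReal (1 - t) = 0 := by
      rw [setLIntegral_congr_fun (g := fun _ => 0) measurableSet_Ioi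
        (fun t (ht : (1:ℝ) < t) => ENNReal.ofReal_eq_zero.2 (by linarith)),
        lintegral_zero]
    rw [hz, add_zero]
    have hint : IntegrableOn (fun t : ℝ => 1 - t) (Set.Ioc 0 1) := by
      apply Continuous.integrableOn_Ioc
      exact continuous_const.sub continuous_id
    rw [← ofReal_integral_eq_lintegral_ofReal hint]
    · congr 1
      rw [← intervalIntegral.integral_of_le zero_le_one,
        intervalIntegral.integral_sub intervalIntegrable_const intervalIntegral.intervalIntegrable_id,
        intervalIntegral.integral_const, integral_id]
      norm_num
    · filter_upwards [ae_restrict_mem measurableSet_Ioc] with t ht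
      simp only [Pi.zero_apply]
      linarith [ht.2]
  have hfin : ∫⁻ ω, ENNReal.ofReal (g ω) ∂ℙ = ENNReal.ofReal (1 / 2) := by
    rw [hkey, h2, h3]
  have hI : ∫ ω, g ω ∂ℙ = 1 / 2 := by
    rw [integral_eq_lintegral_of_nonneg_ae (ae_of_all _ fun ω => (Real.exp_pos (-ξ ω)).le)
      hgmeas.aestronglyMeasurable, hfin, ENNReal.toReal_ofReal (by norm_num)]
  have hgint : Integrable g ℙ := by
    apply Integrable.mono' (integrable_const (1 : ℝ)) hgmeas.aestronglyMeasurable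
    filter_upwards [hpos] with ω hω
    rw [Real.norm_eq_abs, abs_of_pos (Real.exp_pos _)]
    exact Real.exp_le_one_iff.mpr (by linarith)
  set P : ℝ → Ω → ℝ :=
    fun a ω => ⨅ N : ℕ, ∏ x ∈ Finset.Icc 1 N, (1 - Real.exp (-ξ ω - a * x)) with hPdef
  have hPmeas : ∀ a, Measurable (P a) := by
    intro a
    apply Measurable.iInf
    intro N
    apply Finset.measurable_prod
    intro i _
    exact measurable_const.sub (Real.measurable_exp.comp (hmeas.neg.sub measurable_const))
  -- pointwise bounds
  have hpt : ∀ a : ℝ, 0 < a → ∀ ω : Ω, 0 < ξ ω →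
      0 ≤ P a ω ∧ P a ω ≤ 1 ∧ P a ω ≤ 1 - Real.exp (-a) * g ω ∧
        1 - g ω / (Real.exp a - 1) ≤ P a ω := by
    intro a ha ω hω
    set Q : ℕ → ℝ := fun N => ∏ x ∈ Finset.Icc 1 N, (1 - Real.exp (-ξ ω - a * x)) with hQdef
    have hu0 : ∀ x : ℕ, 0 < Real.exp (-ξ ω - a * x) := fun x => Real.exp_pos _
    have hu1 : ∀ x : ℕ, 1 ≤ x → Real.exp (-ξ ω - a * x) ≤ 1 := by
      intro x hx
      apply Real.exp_le_one_iff.mpr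
      have hx' : (1 : ℝ) ≤ (x : ℝ) := by exact_mod_cast hx
      nlinarith
    have hQ0 : ∀ N, 0 ≤ Q N := by
      intro N
      apply Finset.prod_nonneg
      intro x hx
      have := hu1 x (Finset.mem_Icc.mp hx).1
      linarith
    have hQ1 : ∀ N, Q N ≤ 1 := by
      intro N
      apply Finset.prod_le_one
      · intro x hx
        have := hu1 x (Finset.mem_Icc.mp hx).1
        linarith
      · intro x hx
        linarith [hu0 x]
    have hbdd : BddBelow (Set.range Q) := ⟨0, by rintro _ ⟨N, rfl⟩; exact hQ0 N⟩
    have hP0 : 0 ≤ P a ω := le_ciInf hQ0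
    have hP1 : P a ω ≤ 1 := by
      have h := ciInf_le hbdd 0
      simpa [hQdef] using h
    have hPle : P a ω ≤ 1 - Real.exp (-a) * g ω := by
      have h := ciInf_le hbdd 1
      have h1 : Q 1 = 1 - Real.exp (-a) * g ω := by
        rw [hQdef]
        simp only [Finset.Icc_self, Finset.prod_singleton]
        rw [hgdef, ← Real.exp_add]
        push_cast
        ring_nf
      rwa [h1] at h
    have hPge : 1 - g ω / (Real.exp a - 1) ≤ P a ω := by
      apply le_ciInf
      intro N
      have hw := weier (Finset.Icc 1 N) (fun x => Real.exp (-ξ ω - a * x))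
        (fun i _ => (hu0 i).le) (fun i hi => hu1 i (Finset.mem_Icc.mp hi).1)
      have hterm : ∀ x : ℕ, Real.exp (-ξ ω - a * x) = g ω * Real.exp (-a) ^ x := by
        intro x
        rw [hgdef, ← Real.exp_nat_mul, ← Real.exp_add]
        congr 1
        push_cast
        ring
      have hsum : ∑ x ∈ Finset.Icc 1 N, Real.exp (-ξ ω - a * x) ≤ g ω / (Real.exp a - 1) := by
        rw [Finset.sum_congr rfl (fun x _ => hterm x), ← Finset.mul_sum]
        have hr1 : Real.exp (-a) < 1 := Real.exp_lt_one_iff.mpr (by linarith)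
        have hgeo := geom (Real.exp (-a)) (Real.exp_pos _).le hr1 N
        have hE : 1 < Real.exp a := Real.one_lt_exp_iff.mpr ha
        have heq : Real.exp (-a) / (1 - Real.exp (-a)) = 1 / (Real.exp a - 1) := by
          rw [Real.exp_neg]
          rw [div_eq_div_iff]
          · field_simp
          · have : (Real.exp a)⁻¹ < 1 := by
              rw [inv_lt_one_iff₀]; right; exact hE
            linarith
          · linarith
        calc g ω * ∑ x ∈ Finset.Icc 1 N, Real.exp (-a) ^ x
            ≤ g ω * (Real.exp (-a) / (1 - Real.exp (-a))) :=
              mul_le_mul_of_nonneg_left hgeo (Real.exp_pos _).le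
          _ = g ω / (Real.exp a - 1) := by rw [heq]; ring
      calc 1 - g ω / (Real.exp a - 1) ≤ 1 - ∑ x ∈ Finset.Icc 1 N, Real.exp (-ξ ω - a * x) := by
            linarith
        _ ≤ Q N := hw
    exact ⟨hP0, hP1, hPle, hPge⟩
  -- integrability of P a
  have hPint : ∀ a : ℝ, 0 < a → Integrable (P a) ℙ := by
    intro a ha
    apply Integrable.mono' (integrable_const (1 : ℝ)) (hPmeas a).aestronglyMeasurable
    filter_upwards [hpos] with ω hω
    obtain ⟨h0, h1, -, -⟩ := hpt a ha ω hω
    rw [Real.norm_eq_abs, abs_le]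
    constructor <;> linarith
  -- integral bounds
  have hEb : ∀ a : ℝ, 0 < a →
      (1 - Real.exp (-a)) * (1 / 2) ≤ (Real.exp a - 1) * (1 - ∫ ω, P a ω ∂ℙ) ∧
      (Real.exp a - 1) * (1 - ∫ ω, P a ω ∂ℙ) ≤ 1 / 2 := by
    intro a ha
    have hE : 1 < Real.exp a := Real.one_lt_exp_iff.mpr ha
    have hIub : ∫ ω, P a ω ∂ℙ ≤ 1 - Real.exp (-a) * (1 / 2) := by
      have hint2 : Integrable (fun ω => 1 - Real.exp (-a) * g ω) ℙ :=
        (integrable_const (1 : ℝ)).sub (hgint.const_mul _)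
      have hmono := integral_mono_ae (hPint a ha) hint2
        (by filter_upwards [hpos] with ω hω; exact (hpt a ha ω hω).2.2.1)
      rwa [integral_sub (integrable_const 1) (hgint.const_mul _), integral_const,
        integral_const_mul, probReal_univ, one_smul, hI] at hmono
    have hIlb : 1 - (1 / 2) / (Real.exp a - 1) ≤ ∫ ω, P a ω ∂ℙ := by
      have hint2 : Integrable (fun ω => 1 - g ω / (Real.exp a - 1)) ℙ :=
        (integrable_const (1 : ℝ)).sub (hgint.div_const _)
      have hmono := integral_mono_ae hint2 (hPint a ha)
        (by filter_upwards [hpos] with ω hω; exact (hpt a ha ω hω).2.2.2)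
      rwa [integral_sub (integrable_const 1) (hgint.div_const _), integral_const,
        integral_div, probReal_univ, one_smul, hI] at hmono
    constructor
    · have h1 : Real.exp (-a) * (1 / 2) ≤ 1 - ∫ ω, P a ω ∂ℙ := by linarith
      have h2 := mul_le_mul_of_nonneg_left h1 (by linarith : (0:ℝ) ≤ Real.exp a - 1)
      have h3 : (Real.exp a - 1) * (Real.exp (-a) * (1 / 2)) = (1 - Real.exp (-a)) * (1 / 2) := by
        rw [Real.exp_neg]
        field_simp
      linarith
    · have h1 : 1 - ∫ ω, P a ω ∂ℙ ≤ (1 / 2) / (Real.exp a - 1) := by linarith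
      have h2 := mul_le_mul_of_nonneg_left h1 (by linarith : (0:ℝ) ≤ Real.exp a - 1)
      have h3 : (Real.exp a - 1) * ((1 / 2) / (Real.exp a - 1)) = 1 / 2 := by
        rw [mul_comm, div_mul_cancel₀]
        linarith
      linarith
  -- squeeze
  have hlow : Tendsto (fun a : ℝ => (1 - Real.exp (-a)) * (1 / 2)) atTop (nhds (1 / 2)) := by
    have h0 : Tendsto (fun a : ℝ => Real.exp (-a)) atTop (nhds 0) :=
      Real.tendsto_exp_neg_atTop_nhds_zero
    have := (h0.const_sub 1).mul_const (1 / 2 : ℝ)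
    simpa using this
  apply tendsto_of_tendsto_of_tendsto_of_le_of_le' hlow tendsto_const_nhds
  · filter_upwards [eventually_gt_atTop (0 : ℝ)] with a ha
    exact (hEb a ha).1
  · filter_upwards [eventually_gt_atTop (0 : ℝ)] with a ha
    exact (hEb a ha).2
end
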